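/- Let 0 < C, ρ < ∞ be real constants, let D : ℕ → ℝ be a nonnegative sequence, and define G_n = Σ_{k=0}^n binom(n,k)·C^k·D_{n−k}. Assume G_n > 0 for all n and n·G_{n−1}/G_n → ρ as n → ∞. Then for every fixed k ≥ 0, the ratio (binom(n,k)·C^k·D_{n−k})/G_n converges to e^{−Cρ}·(Cρ)^k/k! as n → ∞. -/

import Mathlib

open Finset Filter

private lemma alt_sum_choose (N m : ℕ) (hN : 1 ≤ N) :
    ∑ s ∈ Finset.range (m + 1), (-1 : ℝ) ^ s * (N.choose s : ℝ)
      = (-1) ^ m * ((N - 1).choose m : ℝ) := by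
  induction m with
  | zero => simp
  | succ m ih =>
    rw [Finset.sum_range_succ, ih]
    obtain ⟨N', rfl⟩ : ∃ N', N = N' + 1 := ⟨N - 1, (Nat.succ_pred_eq_of_pos hN).symm⟩
    simp only [Nat.add_sub_cancel]
    rw [Nat.choose_succ_succ]
    push_cast
    rw [pow_succ]
    ring

private lemma choose_pair (j k s : ℕ) :
    ((k + s).choose k : ℝ) * (j.choose (k + s) : ℝ)
      = (j.choose k : ℝ) * ((j - k).choose s : ℝ) := by
  rcases le_or_gt (k + s) j with h | h
  · have h1 := Nat.choose_mul (n := j) (k := k + s) (s := k) (Nat.le_add_right k s)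
    rw [show k + s - k = s by omega] at h1
    rw [mul_comm]
    exact_mod_cast congrArg (Nat.cast : ℕ → ℝ) h1
  · rcases le_or_gt k j with hkj | hkj
    · have h1 : j.choose (k + s) = 0 := Nat.choose_eq_zero_of_lt h
      have h2 : (j - k).choose s = 0 := Nat.choose_eq_zero_of_lt (by omega)
      simp [h1, h2]
    · have h1 : j.choose (k + s) = 0 := Nat.choose_eq_zero_of_lt (by omega)
      have h2 : j.choose k = 0 := Nat.choose_eq_zero_of_lt hkj
      simp [h1, h2]

private lemma bonferroni_pt (j k m : ℕ) :
    ∑ s ∈ Finset.range (m + 1),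
        (-1 : ℝ) ^ s * (((k + s).choose k : ℝ) * (j.choose (k + s) : ℝ))
      = (j.choose k : ℝ) *
          ∑ s ∈ Finset.range (m + 1), (-1 : ℝ) ^ s * ((j - k).choose s : ℝ) := by
  rw [Finset.mul_sum]
  refine Finset.sum_congr rfl fun s _ => ?_
  rw [choose_pair]
  ring

private lemma bonferroni_upper (j k m : ℕ) (hm : Even m) :
    (if j = k then (1 : ℝ) else 0) ≤
      ∑ s ∈ Finset.range (m + 1),
        (-1 : ℝ) ^ s * (((k + s).choose k : ℝ) * (j.choose (k + s) : ℝ)) := by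
  rw [bonferroni_pt]
  rcases lt_trichotomy j k with h | rfl | h
  · simp [Nat.choose_eq_zero_of_lt h, if_neg (by omega : ¬ j = k)]
  · have hinner : ∑ s ∈ Finset.range (m + 1), (-1 : ℝ) ^ s * ((0:ℕ).choose s : ℝ) = 1 := by
      rw [Finset.sum_eq_single 0]
      · simp
      · intro s _ hs
        simp [Nat.choose_eq_zero_of_lt (by omega : 0 < s)]
      · simp
    rw [Nat.sub_self]
    simp [hinner]
  · rw [alt_sum_choose _ m (by omega), if_neg (by omega : ¬ j = k), hm.neg_one_pow]
    positivity

private lemma bonferroni_lower (j k m : ℕ) (hm : Odd m) :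
    ∑ s ∈ Finset.range (m + 1),
        (-1 : ℝ) ^ s * (((k + s).choose k : ℝ) * (j.choose (k + s) : ℝ))
      ≤ (if j = k then (1 : ℝ) else 0) := by
  rw [bonferroni_pt]
  rcases lt_trichotomy j k with h | rfl | h
  · simp [Nat.choose_eq_zero_of_lt h, if_neg (by omega : ¬ j = k)]
  · have hinner : ∑ s ∈ Finset.range (m + 1), (-1 : ℝ) ^ s * ((0:ℕ).choose s : ℝ) = 1 := by
      rw [Finset.sum_eq_single 0]
      · simp
      · intro s _ hs
        simp [Nat.choose_eq_zero_of_lt (by omega : 0 < s)]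
      · simp
    rw [Nat.sub_self]
    simp [hinner]
  · rw [alt_sum_choose _ m (by omega), if_neg (by omega : ¬ j = k), hm.neg_one_pow]
    have : (0:ℝ) ≤ (j.choose k : ℝ) * ((j - k - 1).choose m : ℝ) := by positivity
    nlinarith

private lemma moment_identity (C : ℝ) (D : ℕ → ℝ) (r n : ℕ) :
    ∑ j ∈ Finset.range (n + 1), (j.choose r : ℝ) * ((n.choose j : ℝ) * C ^ j * D (n - j))
      = (n.choose r : ℝ) * C ^ r *
        ∑ i ∈ Finset.range (n - r + 1), ((n - r).choose i : ℝ) * C ^ i * D (n - r - i) := by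
  rcases le_or_gt r n with h | h
  · have hsplit : n + 1 = r + (n - r + 1) := by omega
    rw [hsplit, Finset.sum_range_add]
    have h1 : ∑ j ∈ Finset.range r,
        (j.choose r : ℝ) * ((n.choose j : ℝ) * C ^ j * D (n - j)) = 0 :=
      Finset.sum_eq_zero fun j hj => by
        simp [Nat.choose_eq_zero_of_lt (Finset.mem_range.1 hj)]
    rw [h1, zero_add, Finset.mul_sum]
    refine Finset.sum_congr rfl fun i _ => ?_
    have key : ((r + i).choose r : ℝ) * (n.choose (r + i) : ℝ)
        = (n.choose r : ℝ) * ((n - r).choose i : ℝ) := by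
      have h1 := choose_pair n r i
      linarith [h1]
    have hsub : n - (r + i) = n - r - i := by omega
    rw [hsub, pow_add]
    linear_combination (C ^ r * C ^ i * D (n - r - i)) * key
  · have h0 : ∑ j ∈ Finset.range (n + 1),
        (j.choose r : ℝ) * ((n.choose j : ℝ) * C ^ j * D (n - j)) = 0 :=
      Finset.sum_eq_zero fun j hj => by
        have : j < r := by
          have := Finset.mem_range.1 hj; omega
        simp [Nat.choose_eq_zero_of_lt this]
    rw [h0, Nat.choose_eq_zero_of_lt h]
    simp

private lemma hasSum_exp_real (x : ℝ) :
    HasSum (fun s : ℕ => x ^ s / (Nat.factorial s : ℝ)) (Real.exp x) := by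
  have h := (NormedSpace.expSeries_div_summable x).hasSum
  have hx : Real.exp x = ∑' (n : ℕ), x ^ n / (Nat.factorial n : ℝ) := by
    rw [Real.exp_eq_exp_ℝ, NormedSpace.exp_eq_tsum_div]
  rwa [hx]

/-- Lemma (Poisson): if `G_{n,K} = C^{|K|} D_{n-|K|}` (so that
`G_{n,k} = C(n,k) C^k D_{n-k}` and `G_n = Σ_k C(n,k) C^k D_{n-k}`) and
`n G_{n-1}/G_n → ρ`, then `G_{n,k}/G_n → e^{-Cρ} (Cρ)^k / k!` for every fixed `k`. -/
theorem poisson_lemma (C ρ : ℝ) (hC : 0 < C) (hρ : 0 < ρ)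
    (D : ℕ → ℝ) (hD : ∀ n, 0 ≤ D n)
    (G : ℕ → ℝ)
    (hG : ∀ n, G n = ∑ k ∈ Finset.range (n + 1), (n.choose k : ℝ) * C ^ k * D (n - k))
    (hGpos : ∀ n, 0 < G n)
    (hlim : Tendsto (fun n : ℕ => (n : ℝ) * G (n - 1) / G n) atTop (nhds ρ)) :
    ∀ k : ℕ, Tendsto (fun n : ℕ => ((n.choose k : ℝ) * C ^ k * D (n - k)) / G n) atTop
      (nhds (Real.exp (-(C * ρ)) * (C * ρ) ^ k / (k.factorial : ℝ))) := by
  intro k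
  set lam := C * ρ with hlamdef
  -- Step 1: ratio limits
  have hR : ∀ r : ℕ, Tendsto (fun n : ℕ => (n.choose r : ℝ) * C ^ r * G (n - r) / G n)
      atTop (nhds (lam ^ r / (r.factorial : ℝ))) := by
    intro r
    induction r with
    | zero =>
      have heq : (fun n : ℕ => (n.choose 0 : ℝ) * C ^ 0 * G (n - 0) / G n)
          = fun _ : ℕ => (1:ℝ) := by
        funext n
        rw [Nat.choose_zero_right, Nat.sub_zero, pow_zero]
        field_simp [(hGpos n).ne']
        norm_num
      rw [heq]
      simpa using tendsto_const_nhds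
    | succ r ih =>
      have hshift : Tendsto (fun n : ℕ => ((n - r : ℕ) : ℝ) * G (n - r - 1) / G (n - r))
          atTop (nhds ρ) := hlim.comp (tendsto_sub_atTop_nat r)
      have hmul : Tendsto (fun n : ℕ =>
          ((n.choose r : ℝ) * C ^ r * G (n - r) / G n) *
            (C / (r + 1) * (((n - r : ℕ) : ℝ) * G (n - r - 1) / G (n - r))))
          atTop (nhds (lam ^ r / (r.factorial : ℝ) * (C / (r + 1) * ρ))) :=
        ih.mul (tendsto_const_nhds.mul hshift)
      have heq : ∀ᶠ n in atTop,
          ((n.choose r : ℝ) * C ^ r * G (n - r) / G n) *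
            (C / (r + 1) * (((n - r : ℕ) : ℝ) * G (n - r - 1) / G (n - r)))
          = (n.choose (r + 1) : ℝ) * C ^ (r + 1) * G (n - (r + 1)) / G n := by
        filter_upwards [eventually_ge_atTop (r + 1)] with n hn
        have hc : ((n.choose (r + 1) : ℕ) : ℝ) * ((r : ℝ) + 1)
            = (n.choose r : ℝ) * ((n - r : ℕ) : ℝ) := by
          exact_mod_cast congrArg (Nat.cast : ℕ → ℝ) (Nat.choose_succ_right_eq n r)
        have hc' : ((n.choose (r + 1) : ℕ) : ℝ)
            = (n.choose r : ℝ) * ((n - r : ℕ) : ℝ) / ((r : ℝ) + 1) := by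
          rw [eq_div_iff (by positivity)]
          exact hc
        have h1 : n - (r + 1) = n - r - 1 := by omega
        rw [h1, hc']
        have h2 : G (n - r) ≠ 0 := (hGpos _).ne'
        have h3 : G n ≠ 0 := (hGpos _).ne'
        field_simp
        ring
      have hval : lam ^ r / (r.factorial : ℝ) * (C / (r + 1) * ρ)
          = lam ^ (r + 1) / ((r + 1).factorial : ℝ) := by
        rw [Nat.factorial_succ, hlamdef, pow_succ]
        have : ((r.factorial : ℕ) : ℝ) ≠ 0 := by positivity
        push_cast
        field_simp
      rw [← hval]
      exact hmul.congr' heq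
  -- Step 2: moment formula
  have hB : ∀ r n : ℕ,
      ∑ j ∈ Finset.range (n + 1), (j.choose r : ℝ) * ((n.choose j : ℝ) * C ^ j * D (n - j))
        = (n.choose r : ℝ) * C ^ r * G (n - r) := by
    intro r n
    rw [moment_identity, ← hG]
  -- nonnegativity of the weights
  have hW : ∀ n j : ℕ, 0 ≤ (n.choose j : ℝ) * C ^ j * D (n - j) := by
    intro n j
    have := hD (n - j)
    positivity
  -- Step 3: Bonferroni bounds on q_{n,k}/G_n
  have hsum_eq : ∀ m n : ℕ,
      ∑ j ∈ Finset.range (n + 1),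
        (∑ s ∈ Finset.range (m + 1),
          (-1 : ℝ) ^ s * (((k + s).choose k : ℝ) * (j.choose (k + s) : ℝ)))
          * ((n.choose j : ℝ) * C ^ j * D (n - j))
      = ∑ s ∈ Finset.range (m + 1),
          (-1 : ℝ) ^ s * ((k + s).choose k : ℝ)
            * ((n.choose (k + s) : ℝ) * C ^ (k + s) * G (n - (k + s))) := by
    intro m n
    simp only [Finset.sum_mul]
    rw [Finset.sum_comm]
    refine Finset.sum_congr rfl fun s _ => ?_
    rw [← hB (k + s) n, Finset.mul_sum]
    refine Finset.sum_congr rfl fun j _ => ?_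
    ring
  have hind : ∀ n : ℕ, k ≤ n →
      ∑ j ∈ Finset.range (n + 1),
        (if j = k then (1:ℝ) else 0) * ((n.choose j : ℝ) * C ^ j * D (n - j))
      = (n.choose k : ℝ) * C ^ k * D (n - k) := by
    intro n hn
    simp only [ite_mul, one_mul, zero_mul]
    rw [Finset.sum_ite_eq' (Finset.range (n + 1)) k
      (fun j => (n.choose j : ℝ) * C ^ j * D (n - j)),
      if_pos (Finset.mem_range.2 (by omega))]
  -- abbreviations
  set T : ℕ → ℝ := fun m => ∑ s ∈ Finset.range (m + 1),
      (-1 : ℝ) ^ s * ((k + s).choose k : ℝ) * (lam ^ (k + s) / ((k + s).factorial : ℝ))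
    with hTdef
  set u : ℕ → ℕ → ℝ := fun m n => ∑ s ∈ Finset.range (m + 1),
      (-1 : ℝ) ^ s * ((k + s).choose k : ℝ)
        * ((n.choose (k + s) : ℝ) * C ^ (k + s) * G (n - (k + s)) / G n)
    with hudef
  -- Step 4: the Bonferroni inequalities for u
  have hu_sum : ∀ m n : ℕ, u m n =
      (∑ s ∈ Finset.range (m + 1),
        (-1 : ℝ) ^ s * ((k + s).choose k : ℝ)
          * ((n.choose (k + s) : ℝ) * C ^ (k + s) * G (n - (k + s)))) / G n := by
    intro m n
    rw [hudef, Finset.sum_div]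
    exact Finset.sum_congr rfl fun s _ => (mul_div_assoc _ _ _).symm
  have hkey_lower : ∀ m : ℕ, Odd m → ∀ n : ℕ, k ≤ n →
      u m n ≤ ((n.choose k : ℝ) * C ^ k * D (n - k)) / G n := by
    intro m hm n hn
    have h1 : ∑ j ∈ Finset.range (n + 1),
        (∑ s ∈ Finset.range (m + 1),
          (-1 : ℝ) ^ s * (((k + s).choose k : ℝ) * (j.choose (k + s) : ℝ)))
          * ((n.choose j : ℝ) * C ^ j * D (n - j))
        ≤ ∑ j ∈ Finset.range (n + 1),
          (if j = k then (1:ℝ) else 0) * ((n.choose j : ℝ) * C ^ j * D (n - j)) :=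
      Finset.sum_le_sum fun j _ =>
        mul_le_mul_of_nonneg_right (bonferroni_lower j k m hm) (hW n j)
    rw [hsum_eq m n, hind n hn] at h1
    rw [hu_sum]
    exact (div_le_div_iff_of_pos_right (hGpos n)).2 h1
  have hkey_upper : ∀ m : ℕ, Even m → ∀ n : ℕ, k ≤ n →
      ((n.choose k : ℝ) * C ^ k * D (n - k)) / G n ≤ u m n := by
    intro m hm n hn
    have h1 : ∑ j ∈ Finset.range (n + 1),
          (if j = k then (1:ℝ) else 0) * ((n.choose j : ℝ) * C ^ j * D (n - j))
        ≤ ∑ j ∈ Finset.range (n + 1),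
        (∑ s ∈ Finset.range (m + 1),
          (-1 : ℝ) ^ s * (((k + s).choose k : ℝ) * (j.choose (k + s) : ℝ)))
          * ((n.choose j : ℝ) * C ^ j * D (n - j)) :=
      Finset.sum_le_sum fun j _ =>
        mul_le_mul_of_nonneg_right (bonferroni_upper j k m hm) (hW n j)
    rw [hsum_eq m n, hind n hn] at h1
    rw [hu_sum]
    exact (div_le_div_iff_of_pos_right (hGpos n)).2 h1
  -- Step 5: limits of u and T
  have hu : ∀ m : ℕ, Tendsto (fun n => u m n) atTop (nhds (T m)) := by
    intro m
    apply tendsto_finset_sum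
    intro s _
    exact (hR (k + s)).const_mul _
  have hT : Tendsto T atTop
      (nhds (Real.exp (-(C * ρ)) * (C * ρ) ^ k / (k.factorial : ℝ))) := by
    have hT_term : ∀ s : ℕ,
        (-1 : ℝ) ^ s * ((k + s).choose k : ℝ) * (lam ^ (k + s) / ((k + s).factorial : ℝ))
        = lam ^ k / (k.factorial : ℝ) * ((-lam) ^ s / (s.factorial : ℝ)) := by
      intro s
      have hfac := Nat.choose_mul_factorial_mul_factorial (Nat.le_add_right k s)
      rw [Nat.add_sub_cancel_left] at hfac
      have hfac' : ((k + s).choose k : ℝ) * (k.factorial : ℝ) * (s.factorial : ℝ)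
          = ((k + s).factorial : ℝ) := by exact_mod_cast congrArg (Nat.cast : ℕ → ℝ) hfac
      have hk0 : (0:ℝ) < (k.factorial : ℝ) := by positivity
      have hs0 : (0:ℝ) < (s.factorial : ℝ) := by positivity
      have hks0 : (0:ℝ) < ((k + s).factorial : ℝ) := by positivity
      have hch : ((k + s).choose k : ℝ)
          = ((k + s).factorial : ℝ) / ((k.factorial : ℝ) * (s.factorial : ℝ)) := by
        rw [eq_div_iff (by positivity)]
        linear_combination hfac'
      rw [hch, neg_pow, pow_add]
      field_simp
      ring
    have hps : Tendsto (fun m : ℕ => ∑ s ∈ Finset.range (m + 1),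
        (-lam) ^ s / ((s.factorial : ℕ) : ℝ)) atTop (nhds (Real.exp (-lam))) :=
      ((hasSum_exp_real (-lam)).tendsto_sum_nat).comp (tendsto_add_atTop_nat 1)
    have h2 := hps.const_mul (lam ^ k / (k.factorial : ℝ))
    have heq : (fun m : ℕ => lam ^ k / (k.factorial : ℝ) *
        ∑ s ∈ Finset.range (m + 1), (-lam) ^ s / ((s.factorial : ℕ) : ℝ)) = T := by
      funext m
      rw [hTdef, Finset.mul_sum]
      exact Finset.sum_congr rfl fun s _ => (hT_term s).symm
    rw [heq] at h2
    have hval : Real.exp (-(C * ρ)) * (C * ρ) ^ k / (k.factorial : ℝ)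
        = lam ^ k / (k.factorial : ℝ) * Real.exp (-lam) := by
      rw [hlamdef]
      ring
    rw [hval]
    exact h2
  -- Step 6: squeeze
  rw [tendsto_order]
  constructor
  · intro a ha
    obtain ⟨M, hM⟩ := eventually_atTop.1 (hT.eventually (eventually_gt_nhds ha))
    have hmOdd : Odd (2 * M + 1) := ⟨M, by omega⟩
    have hTm : a < T (2 * M + 1) := hM _ (by omega)
    filter_upwards [(hu (2 * M + 1)).eventually (eventually_gt_nhds hTm),
      eventually_ge_atTop k] with n h1 h2
    exact lt_of_lt_of_le h1 (hkey_lower _ hmOdd n h2)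
  · intro a ha
    obtain ⟨M, hM⟩ := eventually_atTop.1 (hT.eventually (eventually_lt_nhds ha))
    have hmEven : Even (2 * M) := even_two_mul M
    have hTm : T (2 * M) < a := hM _ (by omega)
    filter_upwards [(hu (2 * M)).eventually (eventually_lt_nhds hTm),
      eventually_ge_atTop k] with n h1 h2
    exact lt_of_le_of_lt (hkey_upper _ hmEven n h2) h1
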